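/- Let λ > 0, M > 0, p satisfy λe^{pM} = λ + p with p ≠ 0, k ∈ ℝ, and r(x) = k(e^{px} − e^{−λx}). Then the solution g₁(x) = r(x) + λ∫₀^x r(t) dt of the Volterra equation g₁(x) = ∫₀^x λe^{−λ(x−u)} g₁(u) du + r(x) equals g₁(x) = k (λ/p) e^{pM} (e^{px} − 1). -/

import Mathlib

open Real MeasureTheory

lemma int_exp_mul {c : ℝ} (hc : c ≠ 0) (x : ℝ) :
    (∫ t in (0:ℝ)..x, Real.exp (c * t)) = c⁻¹ * (Real.exp (c * x) - 1) := by
  have := intervalIntegral.integral_comp_mul_left (a := (0:ℝ)) (b := x)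
    (f := fun t => Real.exp t) hc
  simp only [smul_eq_mul, mul_zero] at this
  rw [this, integral_exp, Real.exp_zero]

/-- With forcing term `r(x) = k(e^{px} - e^{-λx})` and the fixed-point relation
`λe^{pM} = λ + p` (`p ≠ 0`), the Volterra solution `r(x) + λ∫₀^x r(t) dt` equals
`k (λ/p) e^{pM} (e^{px} - 1)`. -/
theorem stmt8 (lam M p k : ℝ) (hlam : 0 < lam) (hM : 0 < M) (hp : p ≠ 0)
    (heq : lam * Real.exp (p * M) = lam + p)
    (r : ℝ → ℝ) (hr : ∀ x, r x = k * (Real.exp (p * x) - Real.exp (-lam * x))) :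
    ∀ x, r x + lam * (∫ t in (0 : ℝ)..x, r t) =
      k * (lam / p) * Real.exp (p * M) * (Real.exp (p * x) - 1) := by
  intro x
  have h1 : (∫ t in (0:ℝ)..x, r t)
      = k * (p⁻¹ * (Real.exp (p * x) - 1) - (-lam)⁻¹ * (Real.exp (-lam * x) - 1)) := by
    simp only [hr]
    rw [intervalIntegral.integral_const_mul]
    rw [intervalIntegral.integral_sub, int_exp_mul hp, int_exp_mul (by simpa using hlam.ne' : (-lam : ℝ) ≠ 0)]
    · exact (Real.continuous_exp.comp (continuous_const.mul continuous_id)).intervalIntegrable 0 x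
    · exact (Real.continuous_exp.comp (continuous_const.mul continuous_id)).intervalIntegrable 0 x
  rw [hr, h1]
  have hl := hlam.ne'
  have hE : Real.exp (p * M) = (lam + p) / lam := by
    field_simp [← heq, mul_comm]
    linarith [heq]
  rw [hE, inv_neg]
  field_simp
  ring
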